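/- The contextual fraction is subadditive under independent juxtapositions: for behaviors B1 in a scenario S1 and B2 in a scenario S2, with NC(S1), NC(S2) and NC(S1 ⊗ S2) nonempty, one has C(B1 ⊗ B2) ≤ C(B1) + C(B2) − C(B1)·C(B2) ≤ C(B1) + C(B2), where C(B1 ⊗ B2) is computed in the juxtaposed scenario S1 ⊗ S2. -/

import Mathlib

open scoped BigOperators

/-- A probability distribution on a finite type. -/
def IsDist {X : Type} [Fintype X] (f : X → ℝ) : Prop :=
  (∀ x, 0 ≤ f x) ∧ ∑ x, f x = 1

lemma isDist_prodFun {A B : Type} [Fintype A] [Fintype B] {f : A → ℝ} {g : B → ℝ}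
    (hf : IsDist f) (hg : IsDist g) :
    IsDist (fun x : A × B => f x.1 * g x.2) := by
  refine ⟨fun x => mul_nonneg (hf.1 x.1) (hg.1 x.2), ?_⟩
  calc ∑ x : A × B, f x.1 * g x.2 = ∑ a, ∑ b, f a * g b := by
        rw [Fintype.sum_prod_type]
    _ = (∑ a, f a) * (∑ b, g b) := by rw [Finset.sum_mul_sum]
    _ = 1 := by rw [hf.2, hg.2, mul_one]

lemma isDist_prodFun' {K1 J1 K2 J2 : Type} [Fintype K1] [Fintype J1] [Fintype K2] [Fintype J2]
    {f : K1 × J1 → ℝ} {g : K2 × J2 → ℝ} (hf : IsDist f) (hg : IsDist g) :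
    IsDist (fun kj : (K1 × K2) × (J1 × J2) => f (kj.1.1, kj.2.1) * g (kj.1.2, kj.2.2)) := by
  refine ⟨fun kj => mul_nonneg (hf.1 _) (hg.1 _), ?_⟩
  have h := (isDist_prodFun hf hg).2
  rw [← h]
  exact Fintype.sum_equiv (Equiv.prodProdProdComm K1 K2 J1 J2) _ _ (by rintro ⟨⟨a, b⟩, c, d⟩; rfl)

/-- A prepare-and-measure scenario: finite nonempty sets of preparations `I`,
measurements `J` and outcomes `K` (carried as type-class assumptions on the index
types), together with a family of preparation operational equivalences (pairs of
probability distributions on `I`) and a family of measurement operational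
equivalences (pairs of probability distributions on `K × J`). -/
structure Scenario (I J K : Type) [Fintype I] [Fintype J] [Fintype K] where
  PE : Type
  ME : Type
  prepEq : PE → (I → ℝ) × (I → ℝ)
  measEq : ME → (K × J → ℝ) × (K × J → ℝ)
  prep_dist : ∀ s, IsDist (prepEq s).1 ∧ IsDist (prepEq s).2
  meas_dist : ∀ r, IsDist (measEq r).1 ∧ IsDist (measEq r).2

/-- A behavior: a family `p k ∣ j, i` of nonnegative reals, normalized over outcomes. -/
def IsBehavior {I J K : Type} [Fintype I] [Fintype J] [Fintype K]
    (p : I → J → K → ℝ) : Prop :=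
  (∀ i j k, 0 ≤ p i j k) ∧ ∀ i j, ∑ k, p i j k = 1

/-- A behavior is noncontextual in a scenario `S` if it admits a universally
noncontextual ontological model over a finite ontic space. -/
def Noncontextual {I J K : Type} [Fintype I] [Fintype J] [Fintype K]
    (S : Scenario I J K) (p : I → J → K → ℝ) : Prop :=
  ∃ (n : ℕ) (μ : I → Fin n → ℝ) (ξ : Fin n → J → K → ℝ),
    (∀ i, IsDist (μ i)) ∧
    (∀ l j, IsDist (ξ l j)) ∧
    (∀ i j k, p i j k = ∑ l, ξ l j k * μ i l) ∧
    (∀ s l, ∑ i, ((S.prepEq s).1 i - (S.prepEq s).2 i) * μ i l = 0) ∧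
    (∀ r l, ∑ kj : K × J, ((S.measEq r).1 kj - (S.measEq r).2 kj) * ξ l kj.2 kj.1 = 0)

/-- The juxtaposition of two behaviors. -/
def prodBehavior {I1 J1 K1 I2 J2 K2 : Type}
    [Fintype I1] [Fintype J1] [Fintype K1] [Fintype I2] [Fintype J2] [Fintype K2]
    (p1 : I1 → J1 → K1 → ℝ) (p2 : I2 → J2 → K2 → ℝ) :
    I1 × I2 → J1 × J2 → K1 × K2 → ℝ :=
  fun i j k => p1 i.1 j.1 k.1 * p2 i.2 j.2 k.2

/-- The juxtaposition `S1 ⊗ S2` of two scenarios: preparation (resp. measurement)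
equivalences are all pairs `(α ⊗ γ, β ⊗ γ)` with `(α, β)` an equivalence of `S1` and
`γ` an arbitrary distribution on the preparations (resp. measurement events) of `S2`,
together with the symmetric ones coming from `S2`. -/
def Scenario.prod {I1 J1 K1 I2 J2 K2 : Type}
    [Fintype I1] [Fintype J1] [Fintype K1] [Fintype I2] [Fintype J2] [Fintype K2]
    (S1 : Scenario I1 J1 K1) (S2 : Scenario I2 J2 K2) :
    Scenario (I1 × I2) (J1 × J2) (K1 × K2) where
  PE := (S1.PE × {γ : I2 → ℝ // IsDist γ}) ⊕ (S2.PE × {γ : I1 → ℝ // IsDist γ})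
  ME := (S1.ME × {γ : K2 × J2 → ℝ // IsDist γ}) ⊕ (S2.ME × {γ : K1 × J1 → ℝ // IsDist γ})
  prepEq := fun e =>
    match e with
    | Sum.inl (s, γ) =>
        (fun i => (S1.prepEq s).1 i.1 * γ.1 i.2, fun i => (S1.prepEq s).2 i.1 * γ.1 i.2)
    | Sum.inr (s, γ) =>
        (fun i => γ.1 i.1 * (S2.prepEq s).1 i.2, fun i => γ.1 i.1 * (S2.prepEq s).2 i.2)
  measEq := fun e =>
    match e with
    | Sum.inl (r, γ) =>
        (fun kj => (S1.measEq r).1 (kj.1.1, kj.2.1) * γ.1 (kj.1.2, kj.2.2),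
         fun kj => (S1.measEq r).2 (kj.1.1, kj.2.1) * γ.1 (kj.1.2, kj.2.2))
    | Sum.inr (r, γ) =>
        (fun kj => γ.1 (kj.1.1, kj.2.1) * (S2.measEq r).1 (kj.1.2, kj.2.2),
         fun kj => γ.1 (kj.1.1, kj.2.1) * (S2.measEq r).2 (kj.1.2, kj.2.2))
  prep_dist := by
    rintro (⟨s, γ⟩ | ⟨s, γ⟩)
    · exact ⟨isDist_prodFun (S1.prep_dist s).1 γ.2, isDist_prodFun (S1.prep_dist s).2 γ.2⟩
    · exact ⟨isDist_prodFun γ.2 (S2.prep_dist s).1, isDist_prodFun γ.2 (S2.prep_dist s).2⟩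
  meas_dist := by
    rintro (⟨r, γ⟩ | ⟨r, γ⟩)
    · exact ⟨isDist_prodFun' (S1.meas_dist r).1 γ.2, isDist_prodFun' (S1.meas_dist r).2 γ.2⟩
    · exact ⟨isDist_prodFun' γ.2 (S2.meas_dist r).1, isDist_prodFun' γ.2 (S2.meas_dist r).2⟩

/-- A free operation: a pre-processing of preparations, a pre-processing of
measurement choices and, for each simulated measurement, a post-processing of the
outcomes, all given by stochastic maps. -/
structure FreeOp (I J K I' J' K' : Type)
    [Fintype I] [Fintype J] [Fintype K] [Fintype I'] [Fintype J'] [Fintype K'] where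
  qP : I' → I → ℝ
  qM : J' → J → ℝ
  qO : J' → K → K' → ℝ
  qP_dist : ∀ i', IsDist (qP i')
  qM_dist : ∀ j', IsDist (qM j')
  qO_dist : ∀ j' k, IsDist (qO j' k)

/-- Action of a free operation on a behavior. -/
def FreeOp.apply {I J K I' J' K' : Type}
    [Fintype I] [Fintype J] [Fintype K] [Fintype I'] [Fintype J'] [Fintype K']
    (T : FreeOp I J K I' J' K') (p : I → J → K → ℝ) : I' → J' → K' → ℝ :=
  fun i' j' k' => ∑ i, ∑ j, ∑ k, T.qO j' k k' * p i j k * T.qM j' j * T.qP i' i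

/-- `T` lifts the operational equivalences of `S'` to those of `S`. -/
def LiftsEquivalences {I J K I' J' K' : Type}
    [Fintype I] [Fintype J] [Fintype K] [Fintype I'] [Fintype J'] [Fintype K']
    (S : Scenario I J K) (S' : Scenario I' J' K') (T : FreeOp I J K I' J' K') : Prop :=
  (∀ s' : S'.PE, ∃ s : S.PE, ∀ i : I,
      ∑ i' : I', ((S'.prepEq s').1 i' - (S'.prepEq s').2 i') * T.qP i' i
        = (S.prepEq s).1 i - (S.prepEq s).2 i) ∧
  (∀ r' : S'.ME, ∃ r : S.ME, ∀ k : K, ∀ j : J,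
      ∑ kj' : K' × J', ((S'.measEq r').1 kj' - (S'.measEq r').2 kj') *
          (T.qO kj'.2 k kj'.1 * T.qM kj'.2 j)
        = (S.measEq r).1 (k, j) - (S.measEq r).2 (k, j))

/-- The contextual fraction. -/
noncomputable def ctxFraction {I J K : Type} [Fintype I] [Fintype J] [Fintype K]
    (S : Scenario I J K) (p : I → J → K → ℝ) : ℝ :=
  1 - sSup {l : ℝ | 0 ≤ l ∧ l ≤ 1 ∧ ∃ q q' : I → J → K → ℝ,
      Noncontextual S q ∧ IsBehavior q' ∧
      ∀ i j k, p i j k = l * q i j k + (1 - l) * q' i j k}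

/-- The robustness of contextuality. -/
noncomputable def robustness {I J K : Type} [Fintype I] [Fintype J] [Fintype K]
    (S : Scenario I J K) (p : I → J → K → ℝ) : ℝ :=
  sInf {l : ℝ | 0 ≤ l ∧ l ≤ 1 ∧ ∃ q : I → J → K → ℝ, Noncontextual S q ∧
      Noncontextual S (fun i j k => l * q i j k + (1 - l) * p i j k)}

/-- The robustness with respect to a fixed reference behavior. -/
noncomputable def refRobustness {I J K : Type} [Fintype I] [Fintype J] [Fintype K]
    (S : Scenario I J K) (pref p : I → J → K → ℝ) : ℝ :=
  sInf {l : ℝ | 0 ≤ l ∧ l ≤ 1 ∧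
      Noncontextual S (fun i j k => l * pref i j k + (1 - l) * p i j k)}

/-- One term of the Kullback-Leibler divergence, with the conventions
`0 log (0/q) = 0` and `p log (p/0) = ∞` for `p > 0`. -/
noncomputable def klTerm (p q : ℝ) : EReal :=
  if p = 0 then 0 else if q = 0 then ⊤ else ((p * Real.log (p / q) : ℝ) : EReal)

/-- KL divergence between behaviors: maximum over preparations and measurements. -/
noncomputable def DKL {I J K : Type} [Fintype I] [Fintype J] [Fintype K]
    (p q : I → J → K → ℝ) : EReal :=
  ⨆ i : I, ⨆ j : J, ∑ k : K, klTerm (p i j k) (q i j k)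

/-- The relative entropy of contextuality. -/
noncomputable def relEntCtx {I J K : Type} [Fintype I] [Fintype J] [Fintype K]
    (S : Scenario I J K) (p : I → J → K → ℝ) : EReal :=
  ⨅ q ∈ {q : I → J → K → ℝ | Noncontextual S q}, DKL p q

/-- ℓ1 distance between behaviors: maximum over preparations and measurements. -/
noncomputable def D1 {I J K : Type} [Fintype I] [Fintype J] [Fintype K]
    (p q : I → J → K → ℝ) : ℝ :=
  ⨆ ij : I × J, ∑ k : K, |p ij.1 ij.2 k - q ij.1 ij.2 k|

/-- The ℓ1-contextuality distance. -/
noncomputable def l1CtxDistance {I J K : Type} [Fintype I] [Fintype J] [Fintype K]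
    (S : Scenario I J K) (p : I → J → K → ℝ) : ℝ :=
  sInf {d : ℝ | ∃ q : I → J → K → ℝ, Noncontextual S q ∧ D1 p q = d}

/-- The uniform ℓ1-contextuality distance. -/
noncomputable def uniformL1CtxDistance {I J K : Type} [Fintype I] [Fintype J] [Fintype K]
    (S : Scenario I J K) (p : I → J → K → ℝ) : ℝ :=
  (1 / (2 * (Fintype.card I : ℝ) * (Fintype.card J : ℝ))) *
    sInf {d : ℝ | ∃ q : I → J → K → ℝ, Noncontextual S q ∧
      ∑ i, ∑ j, ∑ k, |p i j k - q i j k| = d}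

/-- The measurement-assignment polytope of a scenario. -/
def MAPolytope {I J K : Type} [Fintype I] [Fintype J] [Fintype K]
    (S : Scenario I J K) : Set (K × J → ℝ) :=
  {ξ | (∀ kj, 0 ≤ ξ kj) ∧ (∀ j, ∑ k, ξ (k, j) = 1) ∧
    ∀ r, ∑ kj : K × J, ((S.measEq r).1 kj - (S.measEq r).2 kj) * ξ kj = 0}

section Aux

lemma sum_prod_mul {A B : Type} [Fintype A] [Fintype B] (f : A → ℝ) (g : B → ℝ) :
    ∑ x : A × B, f x.1 * g x.2 = (∑ a, f a) * (∑ b, g b) := by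
  calc ∑ x : A × B, f x.1 * g x.2 = ∑ a, ∑ b, f a * g b := by rw [Fintype.sum_prod_type]
    _ = (∑ a, f a) * (∑ b, g b) := by rw [Finset.sum_mul_sum]

lemma Noncontextual.isBehavior {I J K : Type} [Fintype I] [Fintype J] [Fintype K]
    {S : Scenario I J K} {p : I → J → K → ℝ} (h : Noncontextual S p) : IsBehavior p := by
  obtain ⟨n, μ, ξ, hμ, hξ, hp, -, -⟩ := h
  constructor
  · intro i j k
    rw [hp]
    exact Finset.sum_nonneg fun l _ => mul_nonneg ((hξ l j).1 k) ((hμ i).1 l)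
  · intro i j
    calc ∑ k, p i j k = ∑ k, ∑ l, ξ l j k * μ i l :=
          Finset.sum_congr rfl fun k _ => hp i j k
      _ = ∑ l, ∑ k, ξ l j k * μ i l := Finset.sum_comm
      _ = ∑ l, (∑ k, ξ l j k) * μ i l :=
          Finset.sum_congr rfl fun l _ => (Finset.sum_mul _ _ _).symm
      _ = ∑ l, μ i l := by
          refine Finset.sum_congr rfl fun l _ => ?_
          rw [(hξ l j).2, one_mul]
      _ = 1 := (hμ i).2

lemma isBehavior_prod {I1 J1 K1 I2 J2 K2 : Type}
    [Fintype I1] [Fintype J1] [Fintype K1] [Fintype I2] [Fintype J2] [Fintype K2]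
    {p1 : I1 → J1 → K1 → ℝ} {p2 : I2 → J2 → K2 → ℝ}
    (h1 : IsBehavior p1) (h2 : IsBehavior p2) :
    IsBehavior (prodBehavior p1 p2) := by
  constructor
  · intro i j k
    exact mul_nonneg (h1.1 _ _ _) (h2.1 _ _ _)
  · intro i j
    calc ∑ k : K1 × K2, prodBehavior p1 p2 i j k
        = ∑ k1, ∑ k2, p1 i.1 j.1 k1 * p2 i.2 j.2 k2 := by
          rw [Fintype.sum_prod_type]; rfl
      _ = (∑ k1, p1 i.1 j.1 k1) * (∑ k2, p2 i.2 j.2 k2) := by rw [Finset.sum_mul_sum]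
      _ = 1 := by rw [h1.2, h2.2, mul_one]

lemma noncontextual_prod {I1 J1 K1 I2 J2 K2 : Type}
    [Fintype I1] [Fintype J1] [Fintype K1] [Fintype I2] [Fintype J2] [Fintype K2]
    {S1 : Scenario I1 J1 K1} {S2 : Scenario I2 J2 K2}
    {q1 : I1 → J1 → K1 → ℝ} {q2 : I2 → J2 → K2 → ℝ}
    (h1 : Noncontextual S1 q1) (h2 : Noncontextual S2 q2) :
    Noncontextual (S1.prod S2) (prodBehavior q1 q2) := by
  obtain ⟨n1, μ1, ξ1, hμ1, hξ1, hq1, hs1, hr1⟩ := h1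
  obtain ⟨n2, μ2, ξ2, hμ2, hξ2, hq2, hs2, hr2⟩ := h2
  refine ⟨n1 * n2,
    fun i l => μ1 i.1 (finProdFinEquiv.symm l).1 * μ2 i.2 (finProdFinEquiv.symm l).2,
    fun l j k => ξ1 (finProdFinEquiv.symm l).1 j.1 k.1 * ξ2 (finProdFinEquiv.symm l).2 j.2 k.2,
    ?_, ?_, ?_, ?_, ?_⟩
  · intro i
    refine ⟨fun l => mul_nonneg ((hμ1 i.1).1 _) ((hμ2 i.2).1 _), ?_⟩
    rw [← (isDist_prodFun (hμ1 i.1) (hμ2 i.2)).2]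
    exact Fintype.sum_equiv finProdFinEquiv.symm _ _ fun l => rfl
  · intro l j
    exact isDist_prodFun (hξ1 _ j.1) (hξ2 _ j.2)
  · intro i j k
    have key : ∑ l : Fin (n1 * n2),
        ξ1 (finProdFinEquiv.symm l).1 j.1 k.1 * ξ2 (finProdFinEquiv.symm l).2 j.2 k.2 *
          (μ1 i.1 (finProdFinEquiv.symm l).1 * μ2 i.2 (finProdFinEquiv.symm l).2)
        = ∑ x : Fin n1 × Fin n2,
            ξ1 x.1 j.1 k.1 * ξ2 x.2 j.2 k.2 * (μ1 i.1 x.1 * μ2 i.2 x.2) :=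
      Fintype.sum_equiv finProdFinEquiv.symm _ _ fun l => rfl
    rw [key]
    show q1 i.1 j.1 k.1 * q2 i.2 j.2 k.2 = _
    rw [hq1, hq2, Finset.sum_mul_sum, Fintype.sum_prod_type]
    exact Finset.sum_congr rfl fun l1 _ => Finset.sum_congr rfl fun l2 _ => by ring
  · rintro (⟨s, γ⟩ | ⟨s, γ⟩) l
    · have e1 : ∑ i : I1 × I2,
          (((S1.prod S2).prepEq (Sum.inl (s, γ))).1 i - ((S1.prod S2).prepEq (Sum.inl (s, γ))).2 i) *
            (μ1 i.1 (finProdFinEquiv.symm l).1 * μ2 i.2 (finProdFinEquiv.symm l).2)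
          = (∑ i1, ((S1.prepEq s).1 i1 - (S1.prepEq s).2 i1) * μ1 i1 (finProdFinEquiv.symm l).1) *
            (∑ i2, γ.1 i2 * μ2 i2 (finProdFinEquiv.symm l).2) := by
        rw [Finset.sum_mul_sum, Fintype.sum_prod_type]
        refine Finset.sum_congr rfl fun i1 _ => Finset.sum_congr rfl fun i2 _ => ?_
        show ((S1.prepEq s).1 i1 * γ.1 i2 - (S1.prepEq s).2 i1 * γ.1 i2) * _ = _
        ring
      rw [e1, hs1 s _, zero_mul]
    · have e1 : ∑ i : I1 × I2,
          (((S1.prod S2).prepEq (Sum.inr (s, γ))).1 i - ((S1.prod S2).prepEq (Sum.inr (s, γ))).2 i) *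
            (μ1 i.1 (finProdFinEquiv.symm l).1 * μ2 i.2 (finProdFinEquiv.symm l).2)
          = (∑ i1, γ.1 i1 * μ1 i1 (finProdFinEquiv.symm l).1) *
            (∑ i2, ((S2.prepEq s).1 i2 - (S2.prepEq s).2 i2) * μ2 i2 (finProdFinEquiv.symm l).2) := by
        rw [Finset.sum_mul_sum, Fintype.sum_prod_type]
        refine Finset.sum_congr rfl fun i1 _ => Finset.sum_congr rfl fun i2 _ => ?_
        show (γ.1 i1 * (S2.prepEq s).1 i2 - γ.1 i1 * (S2.prepEq s).2 i2) * _ = _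
        ring
      rw [e1, hs2 s _, mul_zero]
  · rintro (⟨r, γ⟩ | ⟨r, γ⟩) l
    · have e0 : ∑ kj : (K1 × K2) × (J1 × J2),
          (((S1.prod S2).measEq (Sum.inl (r, γ))).1 kj - ((S1.prod S2).measEq (Sum.inl (r, γ))).2 kj) *
            (ξ1 (finProdFinEquiv.symm l).1 kj.2.1 kj.1.1 * ξ2 (finProdFinEquiv.symm l).2 kj.2.2 kj.1.2)
          = (∑ a : K1 × J1, ((S1.measEq r).1 a - (S1.measEq r).2 a) * ξ1 (finProdFinEquiv.symm l).1 a.2 a.1) *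
            (∑ b : K2 × J2, γ.1 b * ξ2 (finProdFinEquiv.symm l).2 b.2 b.1) := by
        rw [← sum_prod_mul (fun a : K1 × J1 => ((S1.measEq r).1 a - (S1.measEq r).2 a) * ξ1 (finProdFinEquiv.symm l).1 a.2 a.1)
          (fun b : K2 × J2 => γ.1 b * ξ2 (finProdFinEquiv.symm l).2 b.2 b.1)]
        refine Fintype.sum_equiv (Equiv.prodProdProdComm K1 K2 J1 J2) _ _ ?_
        rintro ⟨⟨k1, k2⟩, j1, j2⟩
        simp only [Equiv.prodProdProdComm_apply]
        show ((S1.measEq r).1 (k1, j1) * γ.1 (k2, j2) - (S1.measEq r).2 (k1, j1) * γ.1 (k2, j2)) * _ = _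
        ring
      rw [e0, hr1 r _, zero_mul]
    · have e0 : ∑ kj : (K1 × K2) × (J1 × J2),
          (((S1.prod S2).measEq (Sum.inr (r, γ))).1 kj - ((S1.prod S2).measEq (Sum.inr (r, γ))).2 kj) *
            (ξ1 (finProdFinEquiv.symm l).1 kj.2.1 kj.1.1 * ξ2 (finProdFinEquiv.symm l).2 kj.2.2 kj.1.2)
          = (∑ a : K1 × J1, γ.1 a * ξ1 (finProdFinEquiv.symm l).1 a.2 a.1) *
            (∑ b : K2 × J2, ((S2.measEq r).1 b - (S2.measEq r).2 b) * ξ2 (finProdFinEquiv.symm l).2 b.2 b.1) := by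
        rw [← sum_prod_mul (fun a : K1 × J1 => γ.1 a * ξ1 (finProdFinEquiv.symm l).1 a.2 a.1)
          (fun b : K2 × J2 => ((S2.measEq r).1 b - (S2.measEq r).2 b) * ξ2 (finProdFinEquiv.symm l).2 b.2 b.1)]
        refine Fintype.sum_equiv (Equiv.prodProdProdComm K1 K2 J1 J2) _ _ ?_
        rintro ⟨⟨k1, k2⟩, j1, j2⟩
        simp only [Equiv.prodProdProdComm_apply]
        show (γ.1 (k1, j1) * (S2.measEq r).1 (k2, j2) - γ.1 (k1, j1) * (S2.measEq r).2 (k2, j2)) * _ = _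
        ring
      rw [e0, hr2 r _, mul_zero]

/-- The feasible set appearing in the definition of the contextual fraction. -/
def ncfSet {I J K : Type} [Fintype I] [Fintype J] [Fintype K]
    (S : Scenario I J K) (p : I → J → K → ℝ) : Set ℝ :=
  {l : ℝ | 0 ≤ l ∧ l ≤ 1 ∧ ∃ q q' : I → J → K → ℝ,
      Noncontextual S q ∧ IsBehavior q' ∧
      ∀ i j k, p i j k = l * q i j k + (1 - l) * q' i j k}

lemma ctxFraction_eq_ncf {I J K : Type} [Fintype I] [Fintype J] [Fintype K]
    (S : Scenario I J K) (p : I → J → K → ℝ) :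
    ctxFraction S p = 1 - sSup (ncfSet S p) := rfl

lemma zero_mem_ncfSet {I J K : Type} [Fintype I] [Fintype J] [Fintype K]
    {S : Scenario I J K} {p : I → J → K → ℝ}
    (h : ∃ q, Noncontextual S q) (hp : IsBehavior p) : (0 : ℝ) ∈ ncfSet S p := by
  obtain ⟨q, hq⟩ := h
  exact ⟨le_rfl, zero_le_one, q, p, hq, hp, fun i j k => by ring⟩

lemma bddAbove_ncfSet {I J K : Type} [Fintype I] [Fintype J] [Fintype K]
    (S : Scenario I J K) (p : I → J → K → ℝ) : BddAbove (ncfSet S p) :=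
  ⟨1, fun l hl => hl.2.1⟩

lemma mul_mem_ncfSet_prod {I1 J1 K1 I2 J2 K2 : Type}
    [Fintype I1] [Fintype J1] [Fintype K1] [Fintype I2] [Fintype J2] [Fintype K2]
    {S1 : Scenario I1 J1 K1} {S2 : Scenario I2 J2 K2}
    {p1 : I1 → J1 → K1 → ℝ} {p2 : I2 → J2 → K2 → ℝ}
    (hp1 : IsBehavior p1) (hp2 : IsBehavior p2)
    {l1 l2 : ℝ} (hl1 : l1 ∈ ncfSet S1 p1) (hl2 : l2 ∈ ncfSet S2 p2) :
    l1 * l2 ∈ ncfSet (S1.prod S2) (prodBehavior p1 p2) := by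
  obtain ⟨hl10, hl11, q1, q1', hq1, hq1', hd1⟩ := hl1
  obtain ⟨hl20, hl21, q2, q2', hq2, hq2', hd2⟩ := hl2
  have hle : l1 * l2 ≤ 1 := by nlinarith
  refine ⟨mul_nonneg hl10 hl20, hle, ?_⟩
  by_cases h : l1 * l2 = 1
  · have h1e : l1 = 1 := le_antisymm hl11 (by nlinarith)
    have h2e : l2 = 1 := le_antisymm hl21 (by nlinarith)
    refine ⟨prodBehavior q1 q2, prodBehavior p1 p2, noncontextual_prod hq1 hq2,
      isBehavior_prod hp1 hp2, fun i j k => ?_⟩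
    have e1 : p1 i.1 j.1 k.1 = q1 i.1 j.1 k.1 := by
      have := hd1 i.1 j.1 k.1; rw [h1e] at this; simpa using this
    have e2 : p2 i.2 j.2 k.2 = q2 i.2 j.2 k.2 := by
      have := hd2 i.2 j.2 k.2; rw [h2e] at this; simpa using this
    rw [h]
    show p1 i.1 j.1 k.1 * p2 i.2 j.2 k.2 = 1 * (q1 i.1 j.1 k.1 * q2 i.2 j.2 k.2) + _
    rw [e1, e2]; ring
  · have hc : 0 < 1 - l1 * l2 := by
      rcases lt_or_eq_of_le hle with h' | h'
      · linarith
      · exact absurd h' h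
    have b1 := hq1.isBehavior
    have b2 := hq2.isBehavior
    have key : ∀ i j k, prodBehavior p1 p2 i j k - l1 * l2 * prodBehavior q1 q2 i j k
        = l1 * (1 - l2) * (q1 i.1 j.1 k.1 * q2' i.2 j.2 k.2)
          + (1 - l1) * l2 * (q1' i.1 j.1 k.1 * q2 i.2 j.2 k.2)
          + (1 - l1) * (1 - l2) * (q1' i.1 j.1 k.1 * q2' i.2 j.2 k.2) := by
      intro i j k
      show p1 i.1 j.1 k.1 * p2 i.2 j.2 k.2 - l1 * l2 * (q1 i.1 j.1 k.1 * q2 i.2 j.2 k.2) = _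
      rw [hd1 i.1 j.1 k.1, hd2 i.2 j.2 k.2]; ring
    refine ⟨prodBehavior q1 q2,
      fun i j k => (prodBehavior p1 p2 i j k - l1 * l2 * prodBehavior q1 q2 i j k) / (1 - l1 * l2),
      noncontextual_prod hq1 hq2, ⟨?_, ?_⟩, fun i j k => ?_⟩
    · intro i j k
      apply div_nonneg _ hc.le
      rw [key]
      have h1' : (0 : ℝ) ≤ 1 - l1 := by linarith
      have h2' : (0 : ℝ) ≤ 1 - l2 := by linarith
      refine add_nonneg (add_nonneg ?_ ?_) ?_
      · exact mul_nonneg (mul_nonneg hl10 h2') (mul_nonneg (b1.1 _ _ _) (hq2'.1 _ _ _))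
      · exact mul_nonneg (mul_nonneg h1' hl20) (mul_nonneg (hq1'.1 _ _ _) (b2.1 _ _ _))
      · exact mul_nonneg (mul_nonneg h1' h2') (mul_nonneg (hq1'.1 _ _ _) (hq2'.1 _ _ _))
    · intro i j
      rw [← Finset.sum_div, Finset.sum_sub_distrib, (isBehavior_prod hp1 hp2).2 i j,
        ← Finset.mul_sum, (isBehavior_prod b1 b2).2 i j, mul_one]
      exact div_self hc.ne'
    · field_simp
      ring

end Aux

/-- the contextual fraction is subadditive under independent
juxtapositions. -/
theorem ctxFraction_subadditive
    {I1 J1 K1 I2 J2 K2 : Type}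
    [Fintype I1] [Fintype J1] [Fintype K1] [Fintype I2] [Fintype J2] [Fintype K2]
    [Nonempty I1] [Nonempty J1] [Nonempty K1] [Nonempty I2] [Nonempty J2] [Nonempty K2]
    (S1 : Scenario I1 J1 K1) (S2 : Scenario I2 J2 K2)
    (p1 : I1 → J1 → K1 → ℝ) (p2 : I2 → J2 → K2 → ℝ)
    (hp1 : IsBehavior p1) (hp2 : IsBehavior p2)
    (h1 : {q : I1 → J1 → K1 → ℝ | Noncontextual S1 q}.Nonempty)
    (h2 : {q : I2 → J2 → K2 → ℝ | Noncontextual S2 q}.Nonempty)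
    (h12 : {q : I1 × I2 → J1 × J2 → K1 × K2 → ℝ |
        Noncontextual (S1.prod S2) q}.Nonempty) :
    ctxFraction (S1.prod S2) (prodBehavior p1 p2)
        ≤ ctxFraction S1 p1 + ctxFraction S2 p2
            - ctxFraction S1 p1 * ctxFraction S2 p2 ∧
      ctxFraction S1 p1 + ctxFraction S2 p2 - ctxFraction S1 p1 * ctxFraction S2 p2
        ≤ ctxFraction S1 p1 + ctxFraction S2 p2 := by
  have hb1 := bddAbove_ncfSet S1 p1
  have hb2 := bddAbove_ncfSet S2 p2
  have hbp := bddAbove_ncfSet (S1.prod S2) (prodBehavior p1 p2)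
  have h0p : (0 : ℝ) ∈ ncfSet (S1.prod S2) (prodBehavior p1 p2) :=
    zero_mem_ncfSet h12 (isBehavior_prod hp1 hp2)
  have hA1ne : (ncfSet S1 p1).Nonempty := ⟨0, zero_mem_ncfSet h1 hp1⟩
  have hA2ne : (ncfSet S2 p2).Nonempty := ⟨0, zero_mem_ncfSet h2 hp2⟩
  set s1 := sSup (ncfSet S1 p1) with hs1
  set s2 := sSup (ncfSet S2 p2) with hs2
  set sp := sSup (ncfSet (S1.prod S2) (prodBehavior p1 p2)) with hsp
  have s1_0 : 0 ≤ s1 := le_csSup hb1 (zero_mem_ncfSet h1 hp1)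
  have s2_0 : 0 ≤ s2 := le_csSup hb2 (zero_mem_ncfSet h2 hp2)
  have sp_0 : 0 ≤ sp := le_csSup hbp h0p
  have s1_1 : s1 ≤ 1 := csSup_le hA1ne fun l hl => hl.2.1
  have s2_1 : s2 ≤ 1 := csSup_le hA2ne fun l hl => hl.2.1
  have hmul : ∀ l1 ∈ ncfSet S1 p1, ∀ l2 ∈ ncfSet S2 p2, l1 * l2 ≤ sp :=
    fun l1 hl1 l2 hl2 => le_csSup hbp (mul_mem_ncfSet_prod hp1 hp2 hl1 hl2)
  have step : ∀ l2 ∈ ncfSet S2 p2, s1 * l2 ≤ sp := by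
    intro l2 hl2
    rcases eq_or_lt_of_le hl2.1 with h0 | h0
    · rw [← h0, mul_zero]; exact sp_0
    · have hdiv : s1 ≤ sp / l2 :=
        csSup_le hA1ne fun l1 hl1 => (le_div_iff₀ h0).2 (hmul l1 hl1 l2 hl2)
      calc s1 * l2 ≤ sp / l2 * l2 := mul_le_mul_of_nonneg_right hdiv hl2.1
        _ = sp := div_mul_cancel₀ _ h0.ne'
  have key : s1 * s2 ≤ sp := by
    rcases eq_or_lt_of_le s1_0 with h0 | h0
    · rw [← h0, zero_mul]; exact sp_0
    · have hdiv : s2 ≤ sp / s1 := by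
        refine csSup_le hA2ne fun l2 hl2 => (le_div_iff₀ h0).2 ?_
        rw [mul_comm]; exact step l2 hl2
      calc s1 * s2 ≤ s1 * (sp / s1) := mul_le_mul_of_nonneg_left hdiv s1_0
        _ = sp / s1 * s1 := by ring
        _ = sp := div_mul_cancel₀ _ h0.ne'
  rw [ctxFraction_eq_ncf, ctxFraction_eq_ncf, ctxFraction_eq_ncf, ← hs1, ← hs2, ← hsp]
  constructor
  · nlinarith [key]
  · nlinarith [s1_1, s2_1]
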